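/- arXiv:2209.05102 — 8 statements merged into one kernel-verified Lean document; each statement's English description precedes it below -/
import Mathlib

section
/- For every vertex cover C of the infinite hexagonal grid T₃ and all integers m, n ≥ 1, the set C ∩ ({0,…,m−1} × {0,…,2n−1}) has at least m·n elements. -/
/-- A vertex cover of a simple graph: every edge has at least one endpoint in `C`. -/
def IsVertexCover {V : Type*} (G : SimpleGraph V) (C : Set V) : Prop :=
  ∀ ⦃u v : V⦄, G.Adj u v → u ∈ C ∨ v ∈ C

/-- The box `{0,…,w−1} × {0,…,h−1}` (w columns, h rows). -/
def box (w h : ℕ) : Set (ℤ × ℤ) :=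
  Set.Ico (0 : ℤ) (w : ℤ) ×ˢ Set.Ico (0 : ℤ) (h : ℤ)

/-- Subgraph of `G` induced on a set `s` of vertices (kept on the same vertex type). -/
def finGrid (G : SimpleGraph (ℤ × ℤ)) (w h : ℕ) : SimpleGraph (ℤ × ℤ) where
  Adj p q := G.Adj p q ∧ p ∈ box w h ∧ q ∈ box w h
  symm := ⟨fun p q hpq => ⟨hpq.1.symm, hpq.2.2, hpq.2.1⟩⟩
  loopless := ⟨fun p hp => G.loopless.irrefl p hp.1⟩

/-- The infinite hexagonal grid. -/
def T3 : SimpleGraph (ℤ × ℤ) :=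
  SimpleGraph.fromRel (fun p q =>
    q = (p.1, p.2 + 1) ∨
    ((4 : ℤ) ∣ p.2 ∧ q = (p.1 + 1, p.2 + 1)) ∨
    ((4 : ℤ) ∣ (p.2 - 2) ∧ q = (p.1 - 1, p.2 + 1)))

lemma T3_vert (x y : ℤ) : T3.Adj (x, y) (x, y + 1) := by
  rw [T3, SimpleGraph.fromRel_adj]
  exact ⟨by simp [Prod.ext_iff], Or.inl (Or.inl rfl)⟩

open Classical in
/-- Any vertex cover of the infinite hexagonal grid meets `{0,…,m−1} × {0,…,2n−1}` in at least
`m·n` vertices. -/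
theorem stmt_2 (C : Set (ℤ × ℤ)) (hcov : IsVertexCover T3 C)
    (m n : ℕ) (hm : 1 ≤ m) (hn : 1 ≤ n) :
    m * n ≤ (C ∩ box m (2 * n)).ncard := by
  classical
  set S : Finset (ℤ × ℤ) := Finset.Ico (0 : ℤ) (m : ℤ) ×ˢ Finset.Ico (0 : ℤ) (n : ℤ) with hS
  set g : ℤ × ℤ → ℤ × ℤ := fun p =>
    if (p.1, 2 * p.2) ∈ C then (p.1, 2 * p.2) else (p.1, 2 * p.2 + 1) with hg
  have hmem : ∀ p ∈ S, g p ∈ C ∩ box m (2 * n) := by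
    intro p hp
    simp only [hS, Finset.mem_product, Finset.mem_Ico] at hp
    have hc : (p.1, 2 * p.2) ∈ C ∨ (p.1, 2 * p.2 + 1) ∈ C :=
      hcov (T3_vert p.1 (2 * p.2))
    simp only [hg]
    split_ifs with h
    · exact ⟨h, by simp [box]; push_cast; omega⟩
    · exact ⟨hc.resolve_left h, by simp [box]; push_cast; omega⟩
  have hinj : Set.InjOn g S := by
    intro p hp q hq hpq
    simp only [hg] at hpq
    split_ifs at hpq <;>
      (simp only [Prod.ext_iff] at hpq ⊢; constructor <;> omega)
  have hfin : (C ∩ box m (2 * n)).Finite := by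
    apply Set.Finite.inter_of_right
    exact Set.Finite.prod (Set.finite_Ico _ _) (Set.finite_Ico _ _)
  calc (m * n : ℕ) = S.card := by simp [hS]
    _ = (S.image g).card := (Finset.card_image_of_injOn hinj).symm
    _ = ((S.image g : Finset (ℤ × ℤ)) : Set (ℤ × ℤ)).ncard := (Set.ncard_coe_finset _).symm
    _ ≤ (C ∩ box m (2 * n)).ncard := by
        apply Set.ncard_le_ncard _ hfin
        intro x hx
        simp only [Finset.coe_image, Set.mem_image, Finset.mem_coe] at hx
        obtain ⟨p, hp, rfl⟩ := hx
        exact hmem p hp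
end

section
/- The set {(x,y) ∈ ℤ × ℤ : y is even} is a vertex cover of the infinite hexagonal grid T₃, and for all integers m, n ≥ 1 it meets {0,…,m−1} × {0,…,2n−1} in exactly m·n vertices. -/
/-- The set of vertices with even `y` is a vertex cover of the infinite hexagonal grid, and it
meets `{0,…,m−1} × {0,…,2n−1}` in exactly `m·n` vertices. -/
theorem stmt_3 :
    IsVertexCover T3 {p : ℤ × ℤ | Even p.2} ∧
    ∀ m n : ℕ, 1 ≤ m → 1 ≤ n →
      ({p : ℤ × ℤ | Even p.2} ∩ box m (2 * n)).ncard = m * n := by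
  constructor
  · intro u v huv
    rcases huv with ⟨-, h | h⟩ <;>
    · have hy : v.2 = u.2 + 1 ∨ u.2 = v.2 + 1 := by
        rcases h with h | ⟨-, h⟩ | ⟨-, h⟩ <;> simp [h]
      rcases Int.even_or_odd u.2 with he | ho
      · exact Or.inl he
      · right
        rw [Int.odd_iff] at ho
        simp only [Set.mem_setOf_eq, Int.even_iff]
        omega
  · intro m n hm hn
    have hset : {p : ℤ × ℤ | Even p.2} ∩ box m (2 * n) =
        ↑((Finset.Ico (0:ℤ) (m:ℤ)) ×ˢ ((Finset.Ico (0:ℤ) (n:ℤ)).image (fun k => 2 * k))) := by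
      ext ⟨x, y⟩
      simp only [Set.mem_inter_iff, Set.mem_setOf_eq, box, Set.mem_prod, Set.mem_Ico,
        Finset.coe_product, Finset.coe_image, Finset.coe_Ico, Set.mem_image]
      constructor
      · rintro ⟨⟨k, hk⟩, ⟨hx, hy0, hy1⟩⟩
        refine ⟨hx, k, ⟨?_, ?_⟩, by omega⟩ <;> push_cast <;> omega
      · rintro ⟨hx, k, ⟨hk0, hk1⟩, hk⟩
        refine ⟨⟨k, by omega⟩, hx, by omega, ?_⟩
        push_cast
        omega
    rw [hset, Set.ncard_coe_finset, Finset.card_product, Finset.card_image_of_injective _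
      (fun a b h => by omega)]
    simp [Int.toNat_natCast]
end

section
/- For every vertex cover C of the infinite triangular grid T₆ and every integer n ≥ 2, 3·|C ∩ ({0,…,n−1} × {0,…,n−1})| ≥ 2n² − n. -/
/-- The infinite triangular grid. -/
def T6 : SimpleGraph (ℤ × ℤ) :=
  SimpleGraph.fromRel (fun p q =>
    (q.1 - p.1, q.2 - p.2) ∈
      ({(1, 0), (-1, 0), (0, 1), (0, -1), (1, 1), (-1, -1)} : Set (ℤ × ℤ)))

section Aux

lemma adjH (x y : ℤ) : T6.Adj (x, y) (x + 1, y) := by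
  simp [T6, SimpleGraph.fromRel_adj, Prod.ext_iff]

lemma adjV (x y : ℤ) : T6.Adj (x, y) (x, y + 1) := by
  simp [T6, SimpleGraph.fromRel_adj, Prod.ext_iff]

lemma adjD (x y : ℤ) : T6.Adj (x, y) (x + 1, y + 1) := by
  simp [T6, SimpleGraph.fromRel_adj, Prod.ext_iff]

variable {C : Set (ℤ × ℤ)}

/-- Counting a disjoint union. -/
lemma inter_union_ncard {A B : Set (ℤ × ℤ)} (h : Disjoint A B) (hA : A.Finite) (hB : B.Finite) :
    (C ∩ (A ∪ B)).ncard = (C ∩ A).ncard + (C ∩ B).ncard := by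
  rw [Set.inter_union_distrib_left]
  exact Set.ncard_union_eq
    (h.mono Set.inter_subset_right Set.inter_subset_right)
    (hA.inter_of_right C) (hB.inter_of_right C)

lemma pair_le {S : Set (ℤ × ℤ)} {u v : ℤ × ℤ} (hu : u ∈ S) (hv : v ∈ S) (huv : u ≠ v)
    (hS : S.Finite) : 2 ≤ S.ncard := by
  rw [← Set.ncard_pair huv]
  exact Set.ncard_le_ncard (by simp [Set.insert_subset_iff, hu, hv]) hS

lemma edge_bound (hcov : IsVertexCover T6 C) {u v : ℤ × ℤ} (h : T6.Adj u v) :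
    1 ≤ (C ∩ ({u, v} : Set (ℤ × ℤ))).ncard := by
  have hfin : (C ∩ ({u, v} : Set (ℤ × ℤ))).Finite :=
    (Set.toFinite ({u, v} : Set (ℤ × ℤ))).inter_of_right C
  rw [Nat.one_le_iff_ne_zero, ← Nat.pos_iff_ne_zero, Set.ncard_pos hfin]
  rcases hcov h with hc | hc
  · exact ⟨u, hc, by simp⟩
  · exact ⟨v, hc, by simp⟩

lemma tri_bound (hcov : IsVertexCover T6 C) {a b c : ℤ × ℤ}
    (hab : T6.Adj a b) (hbc : T6.Adj b c) (hac : T6.Adj a c) :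
    2 ≤ (C ∩ ({a, b, c} : Set (ℤ × ℤ))).ncard := by
  have hfin : (C ∩ ({a, b, c} : Set (ℤ × ℤ))).Finite :=
    (Set.toFinite ({a, b, c} : Set (ℤ × ℤ))).inter_of_right C
  rcases hcov hab with h1 | h1
  · rcases hcov hbc with h2 | h2
    · exact pair_le ⟨h1, by simp⟩ ⟨h2, by simp⟩ hab.ne hfin
    · exact pair_le ⟨h1, by simp⟩ ⟨h2, by simp⟩ hac.ne hfin
  · rcases hcov hac with h2 | h2
    · exact pair_le ⟨h2, by simp⟩ ⟨h1, by simp⟩ hab.ne hfin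
    · exact pair_le ⟨h1, by simp⟩ ⟨h2, by simp⟩ hbc.ne hfin

/-- "Up" triangle. -/
lemma triU (hcov : IsVertexCover T6 C) (x y : ℤ) :
    2 ≤ (C ∩ ({(x, y), (x + 1, y), (x + 1, y + 1)} : Set (ℤ × ℤ))).ncard :=
  tri_bound hcov (adjH x y) (adjV (x + 1) y) (adjD x y)

/-- "Down" triangle. -/
lemma triL (hcov : IsVertexCover T6 C) (x y : ℤ) :
    2 ≤ (C ∩ ({(x, y), (x, y + 1), (x + 1, y + 1)} : Set (ℤ × ℤ))).ncard :=
  tri_bound hcov (adjV x y) (adjH x (y + 1)) (adjD x y)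

lemma finIcoProd (a b c d : ℤ) : (Set.Ico a b ×ˢ Set.Ico c d : Set (ℤ × ℤ)).Finite :=
  (Set.finite_Ico a b).prod (Set.finite_Ico c d)

/-- Strip of two rows and width `m`: cover has at least `(4m-2)/3` vertices in it. -/
lemma strip2 (hcov : IsVertexCover T6 C) :
    ∀ (m : ℕ) (y0 : ℤ),
      4 * m ≤ 3 * (C ∩ (Set.Ico (0 : ℤ) (m : ℤ) ×ˢ Set.Ico y0 (y0 + 2))).ncard + 2 := by
  intro m
  induction m using Nat.strong_induction_on with
  | _ m ih =>
    intro y0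
    match m with
    | 0 => simp
    | 1 =>
      have hset : (Set.Ico (0 : ℤ) ((1 : ℕ) : ℤ) ×ˢ Set.Ico y0 (y0 + 2))
          = ({((0 : ℤ), y0), ((0 : ℤ), y0 + 1)} : Set (ℤ × ℤ)) := by
        ext ⟨x, y⟩
        simp [Prod.ext_iff]
        omega
      rw [hset]
      have := edge_bound hcov (adjV 0 y0)
      omega
    | 2 =>
      have hset : (Set.Ico (0 : ℤ) ((2 : ℕ) : ℤ) ×ˢ Set.Ico y0 (y0 + 2))
          = ({((0 : ℤ), y0), ((0 : ℤ), y0 + 1)} : Set (ℤ × ℤ))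
            ∪ ({((1 : ℤ), y0), ((1 : ℤ), y0 + 1)} : Set (ℤ × ℤ)) := by
        ext ⟨x, y⟩
        simp [Prod.ext_iff]
        omega
      have hdisj : Disjoint ({((0 : ℤ), y0), ((0 : ℤ), y0 + 1)} : Set (ℤ × ℤ))
          ({((1 : ℤ), y0), ((1 : ℤ), y0 + 1)} : Set (ℤ × ℤ)) := by
        rw [Set.disjoint_left]
        rintro ⟨x, y⟩ h1 h2
        simp [Prod.ext_iff] at h1 h2
        omega
      rw [hset, inter_union_ncard hdisj (Set.toFinite _) (Set.toFinite _)]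
      have h1 := edge_bound hcov (adjV 0 y0)
      have h2 := edge_bound hcov (adjV 1 y0)
      omega
    | (m + 3) =>
      have hsplit : (Set.Ico (0 : ℤ) ((m + 3 : ℕ) : ℤ))
          = Set.Ico (0 : ℤ) (m : ℤ) ∪ Set.Ico (m : ℤ) ((m : ℤ) + 3) := by
        rw [Set.Ico_union_Ico_eq_Ico (by positivity) (by omega)]
        norm_num
      have hblock : (Set.Ico ((m : ℤ)) ((m : ℤ) + 3) ×ˢ Set.Ico y0 (y0 + 2))
          = ({((m : ℤ), y0), ((m : ℤ), y0 + 1), ((m : ℤ) + 1, y0 + 1)} : Set (ℤ × ℤ))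
            ∪ ({((m : ℤ) + 1, y0), ((m : ℤ) + 1 + 1, y0), ((m : ℤ) + 1 + 1, y0 + 1)} :
                Set (ℤ × ℤ)) := by
        ext ⟨x, y⟩
        simp [Prod.ext_iff]
        omega
      have hdisjT : Disjoint
          ({((m : ℤ), y0), ((m : ℤ), y0 + 1), ((m : ℤ) + 1, y0 + 1)} : Set (ℤ × ℤ))
          ({((m : ℤ) + 1, y0), ((m : ℤ) + 1 + 1, y0), ((m : ℤ) + 1 + 1, y0 + 1)} :
              Set (ℤ × ℤ)) := by
        rw [Set.disjoint_left]
        rintro ⟨x, y⟩ h1 h2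
        simp [Prod.ext_iff] at h1 h2
        omega
      rw [hsplit, Set.union_prod,
        inter_union_ncard (by
          rw [Set.disjoint_left]
          rintro ⟨x, y⟩ h1 h2
          simp at h1 h2
          omega) (finIcoProd _ _ _ _) (finIcoProd _ _ _ _),
        hblock, inter_union_ncard hdisjT (Set.toFinite _) (Set.toFinite _)]
      have hT1 := triL hcov (m : ℤ) y0
      have hT2 := triU hcov ((m : ℤ) + 1) y0
      have hIH := ih m (by omega) y0
      omega

/-- Strip of three rows `[0,3)` and width `m`. -/
lemma strip3 (hcov : IsVertexCover T6 C) :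
    ∀ (m : ℕ),
      6 * m ≤ 3 * (C ∩ (Set.Ico (0 : ℤ) (m : ℤ) ×ˢ Set.Ico (0 : ℤ) 3)).ncard + 3 := by
  intro m
  induction m using Nat.strong_induction_on with
  | _ m ih =>
    match m with
    | 0 => simp
    | 1 =>
      have hsub : (C ∩ ({((0 : ℤ), (0 : ℤ)), ((0 : ℤ), (0 : ℤ) + 1)} : Set (ℤ × ℤ)))
          ⊆ C ∩ (Set.Ico (0 : ℤ) ((1 : ℕ) : ℤ) ×ˢ Set.Ico (0 : ℤ) 3) := by
        rintro ⟨x, y⟩ ⟨hc, hm⟩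
        refine ⟨hc, ?_⟩
        simp [Prod.ext_iff] at hm ⊢
        omega
      have h1 := edge_bound hcov (adjV 0 0)
      have h2 := Set.ncard_le_ncard hsub ((finIcoProd _ _ _ _).inter_of_right C)
      omega
    | (m + 2) =>
      have hsplit : (Set.Ico (0 : ℤ) ((m + 2 : ℕ) : ℤ))
          = Set.Ico (0 : ℤ) (m : ℤ) ∪ Set.Ico (m : ℤ) ((m : ℤ) + 2) := by
        rw [Set.Ico_union_Ico_eq_Ico (by positivity) (by omega)]
        norm_num
      have hblock : (Set.Ico ((m : ℤ)) ((m : ℤ) + 2) ×ˢ Set.Ico (0 : ℤ) 3)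
          = ({((m : ℤ), (0 : ℤ)), ((m : ℤ) + 1, (0 : ℤ)), ((m : ℤ) + 1, (0 : ℤ) + 1)} :
              Set (ℤ × ℤ))
            ∪ ({((m : ℤ), (1 : ℤ)), ((m : ℤ), (1 : ℤ) + 1), ((m : ℤ) + 1, (1 : ℤ) + 1)} :
                Set (ℤ × ℤ)) := by
        ext ⟨x, y⟩
        simp [Prod.ext_iff]
        omega
      have hdisjT : Disjoint
          ({((m : ℤ), (0 : ℤ)), ((m : ℤ) + 1, (0 : ℤ)), ((m : ℤ) + 1, (0 : ℤ) + 1)} :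
              Set (ℤ × ℤ))
          ({((m : ℤ), (1 : ℤ)), ((m : ℤ), (1 : ℤ) + 1), ((m : ℤ) + 1, (1 : ℤ) + 1)} :
              Set (ℤ × ℤ)) := by
        rw [Set.disjoint_left]
        rintro ⟨x, y⟩ h1 h2
        simp [Prod.ext_iff] at h1 h2
        omega
      rw [hsplit, Set.union_prod,
        inter_union_ncard (by
          rw [Set.disjoint_left]
          rintro ⟨x, y⟩ h1 h2
          simp at h1 h2
          omega) (finIcoProd _ _ _ _) (finIcoProd _ _ _ _),
        hblock, inter_union_ncard hdisjT (Set.toFinite _) (Set.toFinite _)]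
      have hT1 := triU hcov (m : ℤ) 0
      have hT2 := triL hcov (m : ℤ) 1
      have hIH := ih m (by omega)
      omega

/-- Stack of `k` two-row strips of width `w`. -/
lemma stack2 (hcov : IsVertexCover T6 C) (w : ℕ) :
    ∀ (k : ℕ) (y0 : ℤ),
      4 * w * k ≤ 3 * (C ∩ (Set.Ico (0 : ℤ) (w : ℤ) ×ˢ Set.Ico y0 (y0 + 2 * k))).ncard
        + 2 * k := by
  intro k
  induction k with
  | zero => simp
  | succ k ih =>
    intro y0
    have hcast : ((k + 1 : ℕ) : ℤ) = (k : ℤ) + 1 := by push_cast; ring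
    have hsplit : Set.Ico y0 (y0 + 2 * ((k : ℤ) + 1))
        = Set.Ico y0 (y0 + 2 * (k : ℤ)) ∪ Set.Ico (y0 + 2 * (k : ℤ)) ((y0 + 2 * (k : ℤ)) + 2) := by
      rw [Set.Ico_union_Ico_eq_Ico (by omega) (by omega)]
      congr 1
      ring
    rw [hcast, hsplit, Set.prod_union,
      inter_union_ncard (by
        rw [Set.disjoint_left]
        rintro ⟨x, y⟩ h1 h2
        simp at h1 h2
        omega) (finIcoProd _ _ _ _) (finIcoProd _ _ _ _)]
    have h1 := ih y0
    have h2 := strip2 hcov w (y0 + 2 * (k : ℤ))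
    have hexp : 4 * w * (k + 1) = 4 * w * k + 4 * w := by ring
    linarith

/-- Splitting the rows of a box. -/
lemma split_rows (hcov : IsVertexCover T6 C) (w : ℕ) (a b c : ℤ) (hab : a ≤ b) (hbc : b ≤ c) :
    (C ∩ (Set.Ico (0 : ℤ) (w : ℤ) ×ˢ Set.Ico a c)).ncard
      = (C ∩ (Set.Ico (0 : ℤ) (w : ℤ) ×ˢ Set.Ico a b)).ncard
        + (C ∩ (Set.Ico (0 : ℤ) (w : ℤ) ×ˢ Set.Ico b c)).ncard := by
  rw [← Set.Ico_union_Ico_eq_Ico hab hbc, Set.prod_union]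
  exact inter_union_ncard (by
    rw [Set.disjoint_left]
    rintro ⟨x, y⟩ h1 h2
    simp at h1 h2
    omega) (finIcoProd _ _ _ _) (finIcoProd _ _ _ _)

end Aux

set_option maxHeartbeats 1000000 in
/-- Any vertex cover of the infinite triangular grid meets `{0,…,n−1}²` in at least
`(2n² − n)/3` vertices. -/
theorem stmt_4 (C : Set (ℤ × ℤ)) (hcov : IsVertexCover T6 C)
    (n : ℕ) (hn : 2 ≤ n) :
    2 * n ^ 2 - n ≤ 3 * (C ∩ box n n).ncard := by
  rw [Nat.sub_le_iff_le_add]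
  unfold box
  rcases Nat.even_or_odd n with he | ho
  · obtain ⟨k, hk⟩ := he
    have h := stack2 hcov n k 0
    have e0 : ((0 : ℤ) + 2 * (k : ℤ)) = (n : ℤ) := by omega
    rw [e0] at h
    have e1 : 4 * n * k = 2 * n ^ 2 := by rw [hk]; ring
    have e2 : 2 * k = n := by omega
    rw [e1, e2] at h
    exact h
  · obtain ⟨j, hj⟩ : ∃ j, n = 2 * j + 3 := by
      rcases ho with ⟨k, hk⟩
      exact ⟨k - 1, by omega⟩
    have h3 := strip3 hcov n
    have h2 := stack2 hcov n j 3
    have e : (3 : ℤ) + 2 * (j : ℤ) = (n : ℤ) := by omega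
    rw [e] at h2
    have hsum := split_rows hcov n 0 3 (n : ℤ) (by omega) (by omega)
    rw [hsum]
    have e1 : 2 * n ^ 2 = 4 * n * j + 6 * n := by rw [hj]; ring
    linarith
end

section
/- Let E₀ = {(x,y) ∈ ℤ × ℤ : x + y is even} and E₁ = {(x,y) ∈ ℤ × ℤ : x + y is odd}. Then {E₀, E₁} is a defense-closed family of vertex covers of the infinite square grid T₄, and for every n ≥ 1 each of E₀ and E₁ meets {0,…,2n−1} × {0,…,2n−1} in exactly 2n² vertices. -/
/-- The infinite square grid: `(x,y)` and `(x',y')` adjacent iff `|x−x'| + |y−y'| = 1`. -/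
def T4 : SimpleGraph (ℤ × ℤ) :=
  SimpleGraph.fromRel (fun p q => |p.1 - q.1| + |p.2 - q.2| = 1)

/-- A defense-closed family of vertex covers of `G`: every member is a vertex cover, and for
every member `S` and edge `{u,v}` with `u ∈ S`, `v ∉ S`, some member `S'` is obtained from `S`
by a bijection moving the guard on `u` to `v` and every other guard by at most one edge. -/
def IsDefenseClosedFamily {V : Type*} (G : SimpleGraph V) (F : Set (Set V)) : Prop :=
  (∀ S ∈ F, IsVertexCover G S) ∧
  ∀ S ∈ F, ∀ u v : V, G.Adj u v → u ∈ S → v ∉ S →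
    ∃ S' ∈ F, ∃ f : V → V, Set.BijOn f S S' ∧ f u = v ∧
      ∀ s ∈ S, f s = s ∨ G.Adj s (f s)

lemma adj_abs {p q : ℤ × ℤ} (h : T4.Adj p q) : |p.1 - q.1| + |p.2 - q.2| = 1 := by
  rw [T4, SimpleGraph.fromRel_adj] at h
  rcases h.2 with h' | h'
  · exact h'
  · rw [abs_sub_comm p.1, abs_sub_comm p.2]; exact h'

lemma adj_odd {p q : ℤ × ℤ} (h : T4.Adj p q) :
    Odd (p.1 + p.2 - (q.1 + q.2)) := by
  have h1 := adj_abs h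
  rcases abs_choice (p.1 - q.1) with h2 | h2 <;>
    rcases abs_choice (p.2 - q.2) with h3 | h3 <;>
      rw [h2, h3] at h1 <;>
      · rw [Int.odd_iff]; omega

lemma shift_adj {u v : ℤ × ℤ} (huv : T4.Adj u v) (s : ℤ × ℤ) :
    T4.Adj s (s + (v - u)) := by
  have h1 := adj_abs huv
  rw [T4, SimpleGraph.fromRel_adj]
  constructor
  · intro he
    rw [Prod.ext_iff] at he
    simp only [Prod.fst_add, Prod.snd_add, Prod.fst_sub, Prod.snd_sub] at he
    have e1 : u.1 - v.1 = 0 := by omega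
    have e2 : u.2 - v.2 = 0 := by omega
    rw [e1, e2] at h1
    simp at h1
  · left
    simp only [Prod.fst_add, Prod.snd_add, Prod.fst_sub, Prod.snd_sub]
    rw [show s.1 - (s.1 + (v.1 - u.1)) = u.1 - v.1 by ring,
        show s.2 - (s.2 + (v.2 - u.2)) = u.2 - v.2 by ring]
    exact h1

lemma shift_bijOn {d : ℤ × ℤ} {A B : Set (ℤ × ℤ)}
    (hAB : ∀ p, p ∈ A ↔ p + d ∈ B) :
    Set.BijOn (· + d) A B := by
  refine ⟨fun p hp => (hAB p).1 hp, fun p _ q _ h => by simpa using h,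
    fun q hq => ⟨q - d, ?_, by ring⟩⟩
  rw [hAB]; simpa using hq

lemma count (n : ℕ) :
    ((Finset.Ico (0:ℤ) ((2*n : ℕ) : ℤ) ×ˢ Finset.Ico (0:ℤ) ((2*n : ℕ) : ℤ)).filter
      (fun p => Even (p.1 + p.2))).card = 2 * n ^ 2 ∧
    ((Finset.Ico (0:ℤ) ((2*n : ℕ) : ℤ) ×ˢ Finset.Ico (0:ℤ) ((2*n : ℕ) : ℤ)).filter
      (fun p => ¬ Even (p.1 + p.2))).card = 2 * n ^ 2 := by
  set F := Finset.Ico (0:ℤ) ((2*n:ℕ):ℤ) ×ˢ Finset.Ico (0:ℤ) ((2*n:ℕ):ℤ) with hF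
  have htot : F.card = 4 * n ^ 2 := by
    rw [hF, Finset.card_product, Int.card_Ico]
    simp only [sub_zero]
    have h : (((2*n:ℕ):ℤ)).toNat = 2 * n := by omega
    rw [h]; ring
  have hsum := Finset.card_filter_add_card_filter_not
    (s := F) (p := fun p => Even (p.1 + p.2))
  have heq : (F.filter (fun p => Even (p.1 + p.2))).card
      = (F.filter (fun p => ¬ Even (p.1 + p.2))).card := by
    apply Finset.card_nbij' (i := fun p => (((2*n:ℕ):ℤ) - 1 - p.1, p.2))
      (j := fun p => (((2*n:ℕ):ℤ) - 1 - p.1, p.2))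
    · intro a ha
      simp only [hF, Finset.mem_coe, Finset.mem_filter, Finset.mem_product, Finset.mem_Ico, Int.even_iff,
        Int.not_even_iff] at *
      omega
    · intro a ha
      simp only [hF, Finset.mem_coe, Finset.mem_filter, Finset.mem_product, Finset.mem_Ico, Int.even_iff,
        Int.not_even_iff] at *
      omega
    · intro a _; simp
    · intro a _; simp
  have h2 : 2 * (F.filter (fun p => Even (p.1 + p.2))).card = 2 * (2 * n ^ 2) := by
    rw [two_mul]
    nth_rewrite 2 [heq]
    rw [hsum, htot]; ring
  constructor
  · exact Nat.eq_of_mul_eq_mul_left (by norm_num) h2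
  · rw [← heq]; exact Nat.eq_of_mul_eq_mul_left (by norm_num) h2

/-- `{E₀, E₁}` (even/odd coordinate sum) is a defense-closed family of vertex covers of the
infinite square grid, and each member meets `{0,…,2n−1}²` in exactly `2n²` vertices. -/
theorem stmt_6 :
    IsDefenseClosedFamily T4
      {{p : ℤ × ℤ | Even (p.1 + p.2)}, {p : ℤ × ℤ | Odd (p.1 + p.2)}} ∧
    ∀ n : ℕ, 1 ≤ n →
      ({p : ℤ × ℤ | Even (p.1 + p.2)} ∩ box (2 * n) (2 * n)).ncard = 2 * n ^ 2 ∧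
      ({p : ℤ × ℤ | Odd (p.1 + p.2)} ∩ box (2 * n) (2 * n)).ncard = 2 * n ^ 2 := by
  constructor
  · constructor
    · rintro S (rfl | rfl) u v huv
      · rcases em (Even (u.1 + u.2)) with h | h
        · exact Or.inl h
        · right
          have ho := adj_odd huv
          simp only [Set.mem_setOf_eq, Int.even_iff, Int.odd_iff, Int.not_even_iff] at *
          omega
      · rcases em (Odd (u.1 + u.2)) with h | h
        · exact Or.inl h
        · right
          have ho := adj_odd huv
          simp only [Set.mem_setOf_eq, Int.even_iff, Int.odd_iff, Int.not_odd_iff] at *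
          omega
    · rintro S (rfl | rfl) u v huv hu hv
      · refine ⟨{p : ℤ × ℤ | Odd (p.1 + p.2)}, Or.inr rfl, (· + (v - u)),
          shift_bijOn ?_, by ring, fun s _ => Or.inr (shift_adj huv s)⟩
        intro p
        simp only [Set.mem_setOf_eq, Prod.fst_add, Prod.snd_add, Prod.fst_sub, Prod.snd_sub,
          Int.even_iff, Int.odd_iff] at *
        omega
      · refine ⟨{p : ℤ × ℤ | Even (p.1 + p.2)}, Or.inl rfl, (· + (v - u)),
          shift_bijOn ?_, by ring, fun s _ => Or.inr (shift_adj huv s)⟩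
        intro p
        simp only [Set.mem_setOf_eq, Prod.fst_add, Prod.snd_add, Prod.fst_sub, Prod.snd_sub,
          Int.even_iff, Int.odd_iff] at *
        omega
  · intro n _
    set F := Finset.Ico (0:ℤ) ((2*n:ℕ):ℤ) ×ˢ Finset.Ico (0:ℤ) ((2*n:ℕ):ℤ) with hF
    have hsetE : {p : ℤ × ℤ | Even (p.1 + p.2)} ∩ box (2 * n) (2 * n)
        = ↑(F.filter (fun p => Even (p.1 + p.2))) := by
      ext p
      simp only [Set.mem_inter_iff, Set.mem_setOf_eq, box, Set.mem_prod, Set.mem_Ico,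
        Finset.coe_filter, hF, Finset.mem_product, Finset.mem_Ico]
      tauto
    have hsetO : {p : ℤ × ℤ | Odd (p.1 + p.2)} ∩ box (2 * n) (2 * n)
        = ↑(F.filter (fun p => ¬ Even (p.1 + p.2))) := by
      ext p
      simp only [Set.mem_inter_iff, Set.mem_setOf_eq, box, Set.mem_prod, Set.mem_Ico,
        Finset.coe_filter, hF, Finset.mem_product, Finset.mem_Ico, ← Int.not_even_iff_odd]
      tauto
    rw [hsetE, hsetO, Set.ncard_coe_finset, Set.ncard_coe_finset]
    exact count n
end

section
/- Let D = {(x,y) ∈ ℤ × ℤ : (x ≡ 0 and y ≡ 1 mod 3) or (x ≡ 1 and y ≡ 0 mod 3) or (x ≡ 2 and y ≡ 2 mod 3)} and C = (ℤ × ℤ) \ D. Then the family {C + t : t ∈ ℤ × ℤ} of all translates of C is a defense-closed family of vertex covers of the infinite triangular grid T₆, and for every n ≥ 1 each translate of C meets {0,…,3n−1} × {0,…,3n−1} in exactly 6n² vertices. -/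
/-- The excluded set `D` of the optimal cover of the triangular grid. -/
def D : Set (ℤ × ℤ) :=
  {p | ((3 : ℤ) ∣ p.1 ∧ (3 : ℤ) ∣ (p.2 - 1)) ∨
       ((3 : ℤ) ∣ (p.1 - 1) ∧ (3 : ℤ) ∣ p.2) ∨
       ((3 : ℤ) ∣ (p.1 - 2) ∧ (3 : ℤ) ∣ (p.2 - 2))}

lemma mem_shift (t p : ℤ × ℤ) : p ∈ (fun q => q + t) '' Dᶜ ↔ p - t ∉ D := by
  constructor
  · rintro ⟨q, hq, rfl⟩
    simpa using hq
  · intro h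
    exact ⟨p - t, h, by ring⟩

lemma adj_translate {u v : ℤ × ℤ} (h : T6.Adj u v) (s : ℤ × ℤ) : T6.Adj s (s + (v - u)) := by
  rw [T6, SimpleGraph.fromRel_adj] at h ⊢
  obtain ⟨hne, h2⟩ := h
  simp only [Set.mem_insert_iff, Set.mem_singleton_iff, Prod.mk.injEq, Prod.fst_add,
    Prod.snd_add, Prod.fst_sub, Prod.snd_sub] at h2 ⊢
  refine ⟨?_, ?_⟩
  · intro heq
    apply hne
    have h1 := congrArg Prod.fst heq
    have hsnd := congrArg Prod.snd heq
    simp only [Prod.fst_add, Prod.snd_add, Prod.fst_sub, Prod.snd_sub] at h1 hsnd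
    exact Prod.ext_iff.mpr ⟨by omega, by omega⟩
  · simpa only [add_sub_cancel_left, sub_add_cancel_left, neg_sub, neg_eq_iff_eq_neg,
      show -(1:ℤ) = -1 from rfl, neg_neg, neg_zero] using h2

lemma card1 (n : ℕ) (v : ℤ) :
    ((Finset.Ico (0 : ℤ) ((3 * n : ℕ) : ℤ)).filter (fun x => (3 : ℤ) ∣ x - v)).card = n := by
  have hcast : ((3 * n : ℕ) : ℤ) = 3 * (n : ℤ) := by push_cast; ring
  have h : (Finset.Ico (0 : ℤ) ((3 * n : ℕ) : ℤ)).filter (fun x => (3 : ℤ) ∣ x - v)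
      = (Finset.Ico (0 : ℤ) (n : ℤ)).image (fun i => 3 * i + v % 3) := by
    ext x
    simp only [Finset.mem_filter, Finset.mem_Ico, Finset.mem_image, hcast]
    constructor
    · rintro ⟨⟨h0, h1⟩, hd⟩
      exact ⟨(x - v % 3) / 3, by omega, by omega⟩
    · rintro ⟨i, ⟨h0, h1⟩, rfl⟩
      omega
  rw [h, Finset.card_image_of_injective _ (fun a b hab => by omega), Int.card_Ico]
  simp

/-- The translates of `C = (ℤ×ℤ) \ D` form a defense-closed family of vertex covers of the
infinite triangular grid, each translate meeting `{0,…,3n−1}²` in exactly `6n²` vertices. -/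
theorem stmt_8 :
    IsDefenseClosedFamily T6 {S | ∃ t : ℤ × ℤ, S = (fun p => p + t) '' Dᶜ} ∧
    ∀ n : ℕ, 1 ≤ n → ∀ t : ℤ × ℤ,
      (((fun p => p + t) '' Dᶜ) ∩ box (3 * n) (3 * n)).ncard = 6 * n ^ 2 := by
  constructor
  · constructor
    · rintro S ⟨t, rfl⟩ u v hadj
      by_contra hc
      push_neg at hc
      obtain ⟨hu, hv⟩ := hc
      rw [mem_shift, not_not] at hu hv
      simp only [D, Set.mem_setOf_eq, Prod.fst_sub, Prod.snd_sub] at hu hv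
      have hA := hadj
      simp only [T6, SimpleGraph.fromRel_adj, Set.mem_insert_iff, Set.mem_singleton_iff,
        Prod.mk.injEq] at hA
      obtain ⟨-, h2⟩ := hA
      omega
    · rintro S ⟨t, rfl⟩ u v hadj hu hv
      refine ⟨(fun p => p + (t + (v - u))) '' Dᶜ, ⟨t + (v - u), rfl⟩,
        (fun p => p + (v - u)), ?_, by ring, ?_⟩
      · have himg : (fun p => p + (v - u)) '' ((fun p => p + t) '' Dᶜ)
            = (fun p => p + (t + (v - u))) '' Dᶜ := by
          rw [← Set.image_comp]
          apply Set.image_congr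
          intro a _
          show a + t + (v - u) = a + (t + (v - u))
          abel
        exact himg ▸ Set.InjOn.bijOn_image (fun a _ b _ hab => by
          have h1 := congrArg Prod.fst hab
          have h2 := congrArg Prod.snd hab
          simp only [Prod.fst_add, Prod.snd_add] at h1 h2
          exact Prod.ext_iff.mpr ⟨by omega, by omega⟩)
      · intro s _
        exact Or.inr (adj_translate hadj s)
  · intro n hn t
    have hcast : ((3 * n : ℕ) : ℤ) = 3 * (n : ℤ) := by push_cast; ring
    set B : Finset (ℤ × ℤ) :=
      (Finset.Ico (0 : ℤ) ((3 * n : ℕ) : ℤ)) ×ˢ (Finset.Ico (0 : ℤ) ((3 * n : ℕ) : ℤ)) with hB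
    have hset : ((fun p => p + t) '' Dᶜ) ∩ box (3 * n) (3 * n)
        = ↑(B.filter (fun p => ¬(((3 : ℤ) ∣ p.1 - t.1 ∧ (3 : ℤ) ∣ p.2 - t.2 - 1) ∨
            ((3 : ℤ) ∣ p.1 - t.1 - 1 ∧ (3 : ℤ) ∣ p.2 - t.2) ∨
            ((3 : ℤ) ∣ p.1 - t.1 - 2 ∧ (3 : ℤ) ∣ p.2 - t.2 - 2)))) := by
      ext p
      rw [Set.mem_inter_iff, mem_shift]
      simp only [D, Set.mem_setOf_eq, Prod.fst_sub, Prod.snd_sub, box, Set.mem_prod,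
        Set.mem_Ico, Finset.coe_filter, hB, Finset.mem_product, Finset.mem_Ico]
      exact and_comm
    rw [hset, Set.ncard_coe_finset]
    have hBcard : B.card = 9 * n ^ 2 := by
      rw [hB, Finset.card_product, Int.card_Ico]
      simp only [sub_zero, Int.toNat_natCast]
      ring
    have hclass : ∀ a b : ℤ,
        (B.filter (fun p => (3 : ℤ) ∣ p.1 - a ∧ (3 : ℤ) ∣ p.2 - b)).card = n * n := by
      intro a b
      have : B.filter (fun p => (3 : ℤ) ∣ p.1 - a ∧ (3 : ℤ) ∣ p.2 - b)
          = ((Finset.Ico (0 : ℤ) ((3 * n : ℕ) : ℤ)).filter (fun x => (3 : ℤ) ∣ x - a)) ×ˢ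
            ((Finset.Ico (0 : ℤ) ((3 * n : ℕ) : ℤ)).filter (fun x => (3 : ℤ) ∣ x - b)) := by
        ext p
        simp only [Finset.mem_filter, Finset.mem_product, hB]
        tauto
      rw [this, Finset.card_product, card1, card1]
    have hpos : (B.filter (fun p => (((3 : ℤ) ∣ p.1 - t.1 ∧ (3 : ℤ) ∣ p.2 - t.2 - 1) ∨
            ((3 : ℤ) ∣ p.1 - t.1 - 1 ∧ (3 : ℤ) ∣ p.2 - t.2) ∨
            ((3 : ℤ) ∣ p.1 - t.1 - 2 ∧ (3 : ℤ) ∣ p.2 - t.2 - 2)))).card = 3 * n ^ 2 := by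
      rw [Finset.filter_or, Finset.filter_or]
      rw [Finset.card_union_of_disjoint, Finset.card_union_of_disjoint]
      · have e1 : (B.filter (fun p => (3 : ℤ) ∣ p.1 - t.1 ∧ (3 : ℤ) ∣ p.2 - t.2 - 1)).card
            = n * n := by
          have := hclass t.1 (t.2 + 1)
          convert this using 3
          constructor <;> (rintro ⟨h1, h2⟩; exact ⟨h1, by omega⟩)
        have e2 : (B.filter (fun p => (3 : ℤ) ∣ p.1 - t.1 - 1 ∧ (3 : ℤ) ∣ p.2 - t.2)).card
            = n * n := by
          have := hclass (t.1 + 1) t.2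
          convert this using 3
          constructor <;> (rintro ⟨h1, h2⟩; exact ⟨by omega, h2⟩)
        have e3 : (B.filter (fun p => (3 : ℤ) ∣ p.1 - t.1 - 2 ∧ (3 : ℤ) ∣ p.2 - t.2 - 2)).card
            = n * n := by
          have := hclass (t.1 + 2) (t.2 + 2)
          convert this using 3
          constructor <;> (rintro ⟨h1, h2⟩; exact ⟨by omega, by omega⟩)
        rw [e1, e2, e3]; ring
      · rw [Finset.disjoint_filter]
        rintro p _ ⟨h1, h2⟩ ⟨h3, h4⟩
        omega
      · rw [Finset.disjoint_left]
        rintro p hp hp2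
        simp only [Finset.mem_filter, Finset.mem_union] at hp hp2
        rcases hp.2 with ⟨h1, h2⟩
        rcases hp2 with ⟨_, ⟨h3, h4⟩ | ⟨h3, h4⟩⟩ <;> omega
    have := Finset.card_filter_add_card_filter_not (s := B)
      (p := fun p => (((3 : ℤ) ∣ p.1 - t.1 ∧ (3 : ℤ) ∣ p.2 - t.2 - 1) ∨
            ((3 : ℤ) ∣ p.1 - t.1 - 1 ∧ (3 : ℤ) ∣ p.2 - t.2) ∨
            ((3 : ℤ) ∣ p.1 - t.1 - 2 ∧ (3 : ℤ) ∣ p.2 - t.2 - 2)))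
    omega
end

section
/- For all integers h, w ≥ 2, every vertex cover C of the finite triangular grid T₆(h,w) satisfies 3·|C| ≥ 2·h·w − h. -/
/-! ### Auxiliary material: an explicit clique partition of the box

We partition the box into triangles, edges and single vertices of the grid
(`rep` sends every vertex to the label of its clique).  The complement of a
vertex cover is independent, hence meets every clique at most once, so its
size is at most the number of cliques, which we bound by `(h*w + h)/3`. -/

/-- Representative (clique label) of each vertex in an explicit clique partition. -/
def rep (h : ℕ) (p : ℤ × ℤ) : ℤ × ℤ :=
  if p.2 < (if h % 2 = 0 then (h : ℤ) else (h : ℤ) - 3) then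
    if p.1 % 3 = 0 then (p.1, 2 * (p.2 / 2))
    else if p.1 % 3 = 1 then
      (if p.2 % 2 = 1 then (p.1 - 1, 2 * (p.2 / 2)) else (p.1, 2 * (p.2 / 2)))
    else (p.1 - 1, 2 * (p.2 / 2))
  else
    if p.2 = (h : ℤ) - 3 then (p.1 - p.1 % 2, (h : ℤ) - 3)
    else if p.2 = (h : ℤ) - 2 then
      (if p.1 % 2 = 1 then (p.1 - 1, (h : ℤ) - 3) else (p.1, (h : ℤ) - 2))
    else (p.1 - p.1 % 2, (h : ℤ) - 2)

lemma t6_adj {a b c d : ℤ}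
    (hd : (c - a = 1 ∧ d = b) ∨ (c = a ∧ d - b = 1) ∨ (c - a = 1 ∧ d - b = 1) ∨
          (a - c = 1 ∧ b = d) ∨ (a = c ∧ b - d = 1) ∨ (a - c = 1 ∧ b - d = 1)) :
    T6.Adj (a, b) (c, d) := by
  rw [T6, SimpleGraph.fromRel_adj]
  simp only [Set.mem_insert_iff, Set.mem_singleton_iff, Prod.mk.injEq, ne_eq]
  rcases hd with h | h | h | h | h | h <;> omega

set_option maxHeartbeats 1000000 in
lemma rep_clique' {h w : ℕ} {a b c d : ℤ}
    (hu : (a, b) ∈ box w h) (hv : (c, d) ∈ box w h)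
    (hr : rep h (a, b) = rep h (c, d)) (hne : ¬(a = c ∧ b = d)) :
    (c - a = 1 ∧ d = b) ∨ (c = a ∧ d - b = 1) ∨ (c - a = 1 ∧ d - b = 1) ∨
    (a - c = 1 ∧ b = d) ∨ (a = c ∧ b - d = 1) ∨ (a - c = 1 ∧ b - d = 1) := by
  simp only [box, Set.mem_prod, Set.mem_Ico] at hu hv
  simp only [rep] at hr
  split_ifs at hr <;> simp only [Prod.mk.injEq] at hr <;> omega

lemma rep_clique {h w : ℕ} {u v : ℤ × ℤ}
    (hu : u ∈ box w h) (hv : v ∈ box w h) (hr : rep h u = rep h v) (hne : u ≠ v) :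
    (finGrid T6 w h).Adj u v := by
  obtain ⟨a, b⟩ := u
  obtain ⟨c, d⟩ := v
  refine ⟨t6_adj (rep_clique' hu hv hr ?_), hu, hv⟩
  simpa [Prod.ext_iff] using hne

/-! ### Counting the cliques -/

def cnt3 (w : ℕ) : Finset ℕ := (Finset.range w).filter (fun n => ¬ n % 3 = 2)
def cnt2 (m : ℕ) : Finset ℕ := (Finset.range m).filter (fun n => n % 2 = 0)

lemma cnt3_card (w : ℕ) : (cnt3 w).card = w - w / 3 := by
  induction w with
  | zero => simp [cnt3]
  | succ n ih =>
    rw [cnt3, Finset.range_add_one, Finset.filter_insert]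
    by_cases hc : ¬ n % 3 = 2
    · rw [if_pos hc, Finset.card_insert_of_notMem (by simp)]
      rw [cnt3] at ih; omega
    · rw [if_neg hc]; rw [cnt3] at ih; omega

lemma cnt2_card (m : ℕ) : (cnt2 m).card = (m + 1) / 2 := by
  induction m with
  | zero => simp [cnt2]
  | succ n ih =>
    rw [cnt2, Finset.range_add_one, Finset.filter_insert]
    by_cases hc : n % 2 = 0
    · rw [if_pos hc, Finset.card_insert_of_notMem (by simp)]
      rw [cnt2] at ih; omega
    · rw [if_neg hc]; rw [cnt2] at ih; omega

def FA (w : ℕ) : Finset ℤ := (cnt3 w).image (Nat.cast : ℕ → ℤ)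
def FE (m : ℕ) : Finset ℤ := (cnt2 m).image (Nat.cast : ℕ → ℤ)

def FF (w h : ℕ) : Finset (ℤ × ℤ) :=
  (FA w ×ˢ FE (if h % 2 = 0 then h else h - 3)) ∪
    (if h % 2 = 0 then ∅ else FE w ×ˢ ({((h : ℤ) - 3), ((h : ℤ) - 2)} : Finset ℤ))

lemma FA_card (w : ℕ) : (FA w).card = w - w / 3 := by
  rw [FA, Finset.card_image_of_injective _ Nat.cast_injective, cnt3_card]

lemma FE_card (m : ℕ) : (FE m).card = (m + 1) / 2 := by
  rw [FE, Finset.card_image_of_injective _ Nat.cast_injective, cnt2_card]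

lemma mem_FA {w : ℕ} {x : ℤ} : x ∈ FA w ↔ 0 ≤ x ∧ x < w ∧ ¬ x % 3 = 2 := by
  simp only [FA, cnt3, Finset.mem_image, Finset.mem_filter, Finset.mem_range]
  constructor
  · rintro ⟨n, ⟨h1, h2⟩, rfl⟩; omega
  · intro hx; exact ⟨x.toNat, ⟨by omega, by omega⟩, by omega⟩

lemma mem_FE {m : ℕ} {x : ℤ} : x ∈ FE m ↔ 0 ≤ x ∧ x < m ∧ x % 2 = 0 := by
  simp only [FE, cnt2, Finset.mem_image, Finset.mem_filter, Finset.mem_range]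
  constructor
  · rintro ⟨n, ⟨h1, h2⟩, rfl⟩; omega
  · intro hx; exact ⟨x.toNat, ⟨by omega, by omega⟩, by omega⟩

lemma mem_FF {w h : ℕ} {x y : ℤ} :
    (x, y) ∈ FF w h ↔
      (0 ≤ x ∧ x < w ∧ ¬ x % 3 = 2 ∧ 0 ≤ y ∧
        y < (if h % 2 = 0 then (h : ℤ) else (h : ℤ) - 3) ∧ y % 2 = 0) ∨
      (¬ h % 2 = 0 ∧ 0 ≤ x ∧ x < w ∧ x % 2 = 0 ∧ (y = (h : ℤ) - 3 ∨ y = (h : ℤ) - 2)) := by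
  by_cases hp : h % 2 = 0 <;>
    simp only [FF, hp, if_true, if_false, ite_true, ite_false, Finset.mem_union,
      Finset.mem_product, mem_FA, mem_FE, Finset.notMem_empty, Finset.mem_insert,
      Finset.mem_singleton, or_false, not_true, not_false_iff, false_and, true_and] <;>
    omega

lemma card_FF {w h : ℕ} (hh : 2 ≤ h) (hw : 2 ≤ w) :
    3 * (FF w h).card ≤ h * w + h := by
  by_cases hp : h % 2 = 0
  · have hcard : (FF w h).card ≤ (w - w / 3) * ((h + 1) / 2) := by
      calc (FF w h).card ≤ (FA w ×ˢ FE h).card + (∅ : Finset (ℤ × ℤ)).card := by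
            rw [FF, hp]; simp only [ite_true, if_true]
            exact le_trans (Finset.card_union_le _ _) (by simp [hp])
        _ = (w - w / 3) * ((h + 1) / 2) := by
            simp [Finset.card_product, FA_card, FE_card]
    have h3a : 3 * (w - w / 3) ≤ 2 * w + 2 := by omega
    have h2e : 2 * ((h + 1) / 2) = h := by omega
    nlinarith [hcard, h3a, h2e]
  · have hcard : (FF w h).card ≤ (w - w / 3) * ((h - 3 + 1) / 2) + ((w + 1) / 2) * 2 := by
      calc (FF w h).card
          ≤ (FA w ×ˢ FE (h - 3)).card +
            (FE w ×ˢ ({((h : ℤ) - 3), ((h : ℤ) - 2)} : Finset ℤ)).card := by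
            rw [FF, if_neg hp, if_neg hp]
            exact Finset.card_union_le _ _
        _ ≤ (w - w / 3) * ((h - 3 + 1) / 2) + ((w + 1) / 2) * 2 := by
            rw [Finset.card_product, Finset.card_product, FA_card, FE_card, FE_card]
            have : ({((h : ℤ) - 3), ((h : ℤ) - 2)} : Finset ℤ).card ≤ 2 :=
              le_trans (Finset.card_insert_le _ _) (by simp)
            exact Nat.add_le_add le_rfl (Nat.mul_le_mul_left _ this)
    obtain ⟨k, rfl⟩ : ∃ k, h = 2 * k + 3 := ⟨(h - 3) / 2, by omega⟩
    have h3a : 3 * (w - w / 3) ≤ 2 * w + 2 := by omega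
    have h2e : (2 * k + 3 - 3 + 1) / 2 = k := by omega
    have h2b : 2 * ((w + 1) / 2) ≤ w + 1 := by omega
    rw [h2e] at hcard
    nlinarith [hcard, Nat.mul_le_mul_right k h3a, h2b]

lemma rep_mem {w h : ℕ} (hh : 2 ≤ h) {p : ℤ × ℤ} (hp : p ∈ box w h) :
    rep h p ∈ FF w h := by
  obtain ⟨a, b⟩ := p
  simp only [box, Set.mem_prod, Set.mem_Ico] at hp
  by_cases hp2 : h % 2 = 0
  · simp only [rep, if_pos hp2]
    split_ifs <;> simp only [mem_FF, if_pos hp2, true_or, or_true, and_true, true_and] <;> omega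
  · simp only [rep, if_neg hp2]
    split_ifs <;> simp only [mem_FF, if_neg hp2, true_or, or_true, and_true, true_and] <;> omega

lemma box_eq_coe (w h : ℕ) :
    box w h = ↑(Finset.Ico (0 : ℤ) (w : ℤ) ×ˢ Finset.Ico (0 : ℤ) (h : ℤ)) := by
  ext ⟨x, y⟩
  simp [box, Set.mem_prod]

lemma box_finite (w h : ℕ) : (box w h).Finite := by
  rw [box_eq_coe]; exact Finset.finite_toSet _

lemma box_ncard (w h : ℕ) : (box w h).ncard = w * h := by
  rw [box_eq_coe, Set.ncard_coe_finset, Finset.card_product, Int.card_Ico, Int.card_Ico]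
  simp

/-- Every vertex cover of the triangular grid `T₆(h,w)` satisfies `3|C| ≥ 2hw − h`. -/
theorem stmt_11 (h w : ℕ) (hh : 2 ≤ h) (hw : 2 ≤ w)
    (C : Set (ℤ × ℤ)) (hsub : C ⊆ box w h)
    (hcov : IsVertexCover (finGrid T6 w h) C) :
    2 * h * w - h ≤ 3 * C.ncard := by
  set I : Set (ℤ × ℤ) := box w h \ C with hIdef
  have hIbox : I ⊆ box w h := Set.diff_subset
  have hboxF : (box w h).Finite := box_finite w h
  have hinj : Set.InjOn (rep h) I := by
    intro u hu v hv hr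
    by_contra hne
    have hadj : (finGrid T6 w h).Adj u v := rep_clique (hIbox hu) (hIbox hv) hr hne
    rcases hcov hadj with hc | hc
    · exact hu.2 hc
    · exact hv.2 hc
  have h1 : I.ncard ≤ (FF w h).card := by
    calc I.ncard = ((rep h) '' I).ncard := (Set.ncard_image_of_injOn hinj).symm
      _ ≤ ((FF w h : Set (ℤ × ℤ))).ncard := by
          refine Set.ncard_le_ncard ?_ (Finset.finite_toSet _)
          rintro q ⟨p, hp, rfl⟩
          exact rep_mem hh (hIbox hp)
      _ = (FF w h).card := Set.ncard_coe_finset _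
  have h2 : 3 * (FF w h).card ≤ h * w + h := card_FF hh hw
  have hIfin : I.Finite := hboxF.subset hIbox
  have h4 : C = box w h \ I := (Set.diff_diff_cancel_left hsub).symm
  have h5 : C.ncard = w * h - I.ncard := by
    rw [h4, Set.ncard_diff hIbox hIfin, box_ncard]
  have h6 : I.ncard ≤ w * h := by
    rw [← box_ncard w h]; exact Set.ncard_le_ncard hIbox hboxF
  obtain ⟨N, hN⟩ : ∃ N, h * w = N := ⟨_, rfl⟩
  have hN' : w * h = N := by rw [← hN]; ring
  have hgoal : 2 * h * w = 2 * N := by rw [← hN]; ring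
  rw [hgoal, h5, hN']
  rw [hN] at h2
  omega
end

section
/- For every integer w ≥ 2, every vertex cover C of the two-row finite octagonal grid T₈(2,w) satisfies 2·|C| ≥ 3w − 1. -/
def T8 : SimpleGraph (ℤ × ℤ) :=
  SimpleGraph.fromRel (fun p q => |p.1 - q.1| ≤ 1 ∧ |p.2 - q.2| ≤ 1)

lemma mem_box_iff {w h : ℕ} {p : ℤ × ℤ} :
    p ∈ box w h ↔ (0 ≤ p.1 ∧ p.1 < w) ∧ (0 ≤ p.2 ∧ p.2 < h) := by
  simp [box, Set.mem_prod]

lemma adj_helper (w : ℕ) {p q : ℤ × ℤ} (hpq : p ≠ q)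
    (h1 : |p.1 - q.1| ≤ 1) (h2 : |p.2 - q.2| ≤ 1)
    (hp : p ∈ box w 2) (hq : q ∈ box w 2) : (finGrid T8 w 2).Adj p q :=
  ⟨⟨hpq, Or.inl ⟨h1, h2⟩⟩, hp, hq⟩

lemma arith (d : ℕ → ℕ) (w : ℕ) (hw : 1 ≤ w)
    (hB : ∀ i < w, 1 ≤ d i)
    (hC : ∀ i, i + 1 < w → 3 ≤ d i + d (i + 1)) :
    3 * w + d (w - 1) ≤ 2 * (∑ i ∈ Finset.range w, d i) + 2 := by
  induction w, hw using Nat.le_induction with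
  | base => have := hB 0 (by norm_num); simp [Finset.sum_range_one]; omega
  | succ n hn ih =>
    have ih' := ih (fun i hi => hB i (by omega)) (fun i hi => hC i (by omega))
    have h3 : 3 ≤ d (n - 1) + d n := by
      have heq : n - 1 + 1 = n := by omega
      simpa [heq] using hC (n - 1) (by omega)
    rw [Finset.sum_range_succ]
    simp only [Nat.add_sub_cancel]
    omega

/-- Every vertex cover of the two-row octagonal grid `T₈(2,w)` satisfies `2|C| ≥ 3w − 1`. -/
theorem stmt_13 (w : ℕ) (hw : 2 ≤ w)
    (C : Set (ℤ × ℤ)) (hsub : C ⊆ box w 2)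
    (hcov : IsVertexCover (finGrid T8 w 2) C) :
    3 * w - 1 ≤ 2 * C.ncard := by
  have hboxfin : (box w 2).Finite :=
    Set.Finite.prod (Set.finite_Ico _ _) (Set.finite_Ico _ _)
  have hfin : C.Finite := hboxfin.subset hsub
  set F := hfin.toFinset with hF
  have hmemF : ∀ p, p ∈ F ↔ p ∈ C := fun p => hfin.mem_toFinset
  have hcard : C.ncard = F.card := Set.ncard_eq_toFinset_card C hfin
  set d : ℕ → ℕ := fun i =>
    (if ((i : ℤ), 0) ∈ F then 1 else 0) + (if ((i : ℤ), 1) ∈ F then 1 else 0) with hd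
  have hvbox : ∀ i : ℕ, i < w → ∀ j : ℤ, j = 0 ∨ j = 1 → ((i : ℤ), j) ∈ box w 2 := by
    intro i hi j hj
    rw [mem_box_iff]
    have : (i : ℤ) < (w : ℤ) := by exact_mod_cast hi
    rcases hj with rfl | rfl <;> refine ⟨⟨by positivity, this⟩, by norm_num⟩
  -- card decomposition
  have hsum : F.card = ∑ i ∈ Finset.range w, d i := by
    rw [Finset.card_eq_sum_card_fiberwise (f := fun p : ℤ × ℤ => p.1.toNat)
      (t := Finset.range w) (fun p hp => by
        have hpC : p ∈ C := (hmemF p).1 hp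
        have := (mem_box_iff.1 (hsub hpC)).1
        simp only [Finset.mem_coe, Finset.mem_range]
        omega)]
    refine Finset.sum_congr rfl (fun i hi => ?_)
    have hi' : i < w := Finset.mem_range.1 hi
    have hfiber : F.filter (fun p : ℤ × ℤ => p.1.toNat = i)
        = ({((i : ℤ), 0), ((i : ℤ), 1)} : Finset (ℤ × ℤ)).filter (fun p => p ∈ F) := by
      ext p
      simp only [Finset.mem_filter, Finset.mem_insert, Finset.mem_singleton]
      constructor
      · rintro ⟨hpF, hp1⟩
        have hpC : p ∈ C := (hmemF p).1 hpF
        have hb := mem_box_iff.1 (hsub hpC)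
        have h1 : p.1 = (i : ℤ) := by omega
        have h2 : p.2 = 0 ∨ p.2 = 1 := by omega
        refine ⟨?_, hpF⟩
        rcases h2 with h2 | h2
        · left; exact Prod.ext h1 h2
        · right; exact Prod.ext h1 h2
      · rintro ⟨hp, hpF⟩
        refine ⟨hpF, ?_⟩
        rcases hp with rfl | rfl <;> simp
    rw [hfiber, Finset.filter_insert, Finset.filter_singleton]
    simp only [hd]
    split_ifs <;> simp [Prod.ext_iff]
  -- column lower bound
  have hB : ∀ i < w, 1 ≤ d i := by
    intro i hi
    have hadj : (finGrid T8 w 2).Adj ((i : ℤ), 0) ((i : ℤ), 1) := by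
      refine adj_helper w (by simp [Prod.ext_iff]) (by simp) (by norm_num)
        (hvbox i hi 0 (Or.inl rfl)) (hvbox i hi 1 (Or.inr rfl))
    have := hcov hadj
    simp only [hd, ← hmemF] at *
    rcases this with h | h <;> simp [h]
  -- consecutive columns lower bound
  have hC3 : ∀ i, i + 1 < w → 3 ≤ d i + d (i + 1) := by
    intro i hi
    set v1 : ℤ × ℤ := ((i : ℤ), 0) with hv1
    set v2 : ℤ × ℤ := ((i : ℤ), 1) with hv2
    set v3 : ℤ × ℤ := (((i + 1 : ℕ) : ℤ), 0) with hv3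
    set v4 : ℤ × ℤ := (((i + 1 : ℕ) : ℤ), 1) with hv4
    have hb1 := hvbox i (by omega) 0 (Or.inl rfl)
    have hb2 := hvbox i (by omega) 1 (Or.inr rfl)
    have hb3 := hvbox (i + 1) hi 0 (Or.inl rfl)
    have hb4 := hvbox (i + 1) hi 1 (Or.inr rfl)
    have hcast : ((i + 1 : ℕ) : ℤ) = (i : ℤ) + 1 := by push_cast; ring
    have habs : |(i : ℤ) - ((i + 1 : ℕ) : ℤ)| ≤ 1 := by rw [hcast]; simp
    have hne13 : v1 ≠ v3 := by
      simp only [hv1, hv3, Ne, Prod.ext_iff, hcast]; omega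
    have hne14 : v1 ≠ v4 := by
      simp only [hv1, hv4, Ne, Prod.ext_iff]; norm_num
    have hne23 : v2 ≠ v3 := by
      simp only [hv2, hv3, Ne, Prod.ext_iff]; norm_num
    have hne24 : v2 ≠ v4 := by
      simp only [hv2, hv4, Ne, Prod.ext_iff, hcast]; omega
    have h12 := hcov (adj_helper w (p := v1) (q := v2)
      (by simp [hv1, hv2, Prod.ext_iff]) (by simp [hv1, hv2]) (by simp [hv1, hv2]) hb1 hb2)
    have h13 := hcov (adj_helper w hne13 habs (by simp [hv1, hv3]) hb1 hb3)
    have h14 := hcov (adj_helper w hne14 habs (by simp [hv1, hv4]) hb1 hb4)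
    have h23 := hcov (adj_helper w hne23 habs (by simp [hv2, hv3]) hb2 hb3)
    have h24 := hcov (adj_helper w hne24 habs (by simp [hv2, hv4]) hb2 hb4)
    have h34 := hcov (adj_helper w (p := v3) (q := v4)
      (by simp [hv3, hv4, Prod.ext_iff]) (by simp [hv3, hv4]) (by simp [hv3, hv4]) hb3 hb4)
    set e1 : ℕ := if v1 ∈ F then 1 else 0 with he1
    set e2 : ℕ := if v2 ∈ F then 1 else 0 with he2
    set e3 : ℕ := if v3 ∈ F then 1 else 0 with he3
    set e4 : ℕ := if v4 ∈ F then 1 else 0 with he4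
    have goal_eq : d i + d (i + 1) = e1 + e2 + e3 + e4 := by
      simp only [hd, he1, he2, he3, he4, hv1, hv2, hv3, hv4]
      ring
    have mem1 : ∀ (v : ℤ × ℤ), v ∈ C → (if v ∈ F then 1 else 0 : ℕ) = 1 := by
      intro v hv; rw [if_pos ((hmemF v).2 hv)]
    have p12 : 1 ≤ e1 + e2 := by
      rcases h12 with h | h
      · rw [he1, mem1 _ h]; omega
      · rw [he2, mem1 _ h]; omega
    have p13 : 1 ≤ e1 + e3 := by
      rcases h13 with h | h
      · rw [he1, mem1 _ h]; omega
      · rw [he3, mem1 _ h]; omega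
    have p14 : 1 ≤ e1 + e4 := by
      rcases h14 with h | h
      · rw [he1, mem1 _ h]; omega
      · rw [he4, mem1 _ h]; omega
    have p23 : 1 ≤ e2 + e3 := by
      rcases h23 with h | h
      · rw [he2, mem1 _ h]; omega
      · rw [he3, mem1 _ h]; omega
    have p24 : 1 ≤ e2 + e4 := by
      rcases h24 with h | h
      · rw [he2, mem1 _ h]; omega
      · rw [he4, mem1 _ h]; omega
    have p34 : 1 ≤ e3 + e4 := by
      rcases h34 with h | h
      · rw [he3, mem1 _ h]; omega
      · rw [he4, mem1 _ h]; omega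
    have b1 : e1 ≤ 1 := by rw [he1]; split_ifs <;> omega
    have b2 : e2 ≤ 1 := by rw [he2]; split_ifs <;> omega
    have b3 : e3 ≤ 1 := by rw [he3]; split_ifs <;> omega
    have b4 : e4 ≤ 1 := by rw [he4]; split_ifs <;> omega
    omega
  have key := arith d w (by omega) hB hC3
  have hlast := hB (w - 1) (by omega)
  omega
end

section
/- For every even integer h ≥ 2 and every integer w ≥ 2, every vertex cover C of the finite octagonal grid T₈(h,w) satisfies 4·|C| ≥ 3·h·w − h. -/
lemma adj_of_close (w h : ℕ) (p q : ℤ × ℤ) (hne : p ≠ q)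
    (h1 : |p.1 - q.1| ≤ 1) (h2 : |p.2 - q.2| ≤ 1)
    (hp : p ∈ box w h) (hq : q ∈ box w h) : (finGrid T8 w h).Adj p q := by
  refine ⟨?_, hp, hq⟩
  exact SimpleGraph.fromRel_adj .. |>.mpr ⟨hne, Or.inl ⟨h1, h2⟩⟩

/-- For even `h`, every vertex cover of the octagonal grid `T₈(h,w)` satisfies
`4|C| ≥ 3hw − h`. -/
theorem stmt_14 (h w : ℕ) (hh : 2 ≤ h) (heven : Even h) (hw : 2 ≤ w)
    (C : Set (ℤ × ℤ)) (hsub : C ⊆ box w h)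
    (hcov : IsVertexCover (finGrid T8 w h) C) :
    3 * h * w - h ≤ 4 * C.ncard := by
  classical
  obtain ⟨m, hm⟩ := heven
  have hboxfin : (box w h).Finite :=
    (Set.finite_Ico _ _).prod (Set.finite_Ico _ _)
  have hCfin : C.Finite := hboxfin.subset hsub
  set CF : Finset (ℤ × ℤ) := hCfin.toFinset with hCF
  have hncard : C.ncard = CF.card := Set.ncard_eq_toFinset_card C hCfin
  have cover : ∀ p q : ℤ × ℤ, p ∈ box w h → q ∈ box w h → p ≠ q →
      |p.1 - q.1| ≤ 1 → |p.2 - q.2| ≤ 1 → p ∈ C ∨ q ∈ C := by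
    intro p q hp hq hne h1 h2
    exact hcov (adj_of_close w h p q hne h1 h2 hp hq)
  set W : ℕ := (w + 1) / 2 with hW
  set M : ℕ := h / 2 with hM
  set f : ℤ × ℤ → ℕ × ℕ := fun p => ((p.1 / 2).toNat, (p.2 / 2).toNat) with hf
  set K : Finset (ℕ × ℕ) := Finset.range W ×ˢ Finset.range M with hK
  have hmem : ∀ p ∈ CF, f p ∈ K := by
    intro p hp
    have hpC : p ∈ C := by rwa [hCF, Set.Finite.mem_toFinset] at hp
    obtain ⟨⟨hp1, hp2⟩, hp3, hp4⟩ := hsub hpC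
    simp only [hK, hf, Finset.mem_product, Finset.mem_range]
    constructor <;> omega
  have hsum := Finset.card_eq_sum_card_fiberwise hmem
  have fiber_ge : ∀ k ∈ K,
      (if 2 * k.1 + 2 ≤ w then 3 else 1) ≤ (CF.filter (fun p => f p = k)).card := by
    intro k hk
    obtain ⟨a, b⟩ := k
    simp only [hK, Finset.mem_product, Finset.mem_range] at hk
    obtain ⟨ha, hb⟩ := hk
    have hb' : 2 * b + 1 < h := by omega
    have ha' : 2 * a < w := by omega
    have memfib : ∀ x y : ℤ, (x, y) ∈ C → x / 2 = (a : ℤ) → y / 2 = (b : ℤ) →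
        (x, y) ∈ CF.filter (fun p => f p = (a, b)) := by
      intro x y hpC h1 h2
      simp only [Finset.mem_filter, hCF, Set.Finite.mem_toFinset, hf, h1, h2]
      refine ⟨hpC, ?_⟩
      simp
    set A : ℤ := 2 * (a : ℤ) with hA
    set B : ℤ := 2 * (b : ℤ) with hB
    by_cases hfull : 2 * a + 2 ≤ w
    · simp only [if_pos hfull]
      set P : Finset (ℤ × ℤ) := {(A, B), (A + 1, B), (A, B + 1), (A + 1, B + 1)} with hP
      have hPbox : ∀ p ∈ P, p ∈ box w h := by
        intro p hp
        simp only [hP, Finset.mem_insert, Finset.mem_singleton] at hp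
        rcases hp with rfl | rfl | rfl | rfl <;>
          exact ⟨⟨by omega, by push_cast [hA]; omega⟩, by omega, by push_cast [hB]; omega⟩
      have hPcard : P.card = 4 := by
        simp only [hP]
        rw [Finset.card_insert_of_notMem (by simp),
          Finset.card_insert_of_notMem (by simp),
          Finset.card_insert_of_notMem (by simp), Finset.card_singleton]
      have key : ∀ r ∈ P, ∀ s ∈ P, |r.1 - s.1| ≤ 1 ∧ |r.2 - s.2| ≤ 1 := by
        intro r hr s hs
        simp only [hP, Finset.mem_insert, Finset.mem_singleton] at hr hs
        rcases hr with rfl | rfl | rfl | rfl <;> rcases hs with rfl | rfl | rfl | rfl <;>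
          constructor <;> simp [abs_le] <;> omega
      have hbad : (P.filter (fun p => p ∉ C)).card ≤ 1 := by
        apply Finset.card_le_one.mpr
        intro p hp q hq
        simp only [Finset.mem_filter] at hp hq
        by_contra hne
        have hk := key p hp.1 q hq.1
        have := cover p q (hPbox p hp.1) (hPbox q hq.1) hne hk.1 hk.2
        tauto
      have hgood : 3 ≤ (P.filter (fun p => p ∈ C)).card := by
        have := Finset.card_filter_add_card_filter_not (s := P)
          (p := fun p => p ∈ C)
        omega
      refine le_trans hgood (Finset.card_le_card ?_)
      intro p hp
      simp only [Finset.mem_filter] at hp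
      have hp' := hp.1
      simp only [hP, Finset.mem_insert, Finset.mem_singleton] at hp'
      rcases hp' with rfl | rfl | rfl | rfl <;>
        exact memfib _ _ hp.2 (by omega) (by omega)
    · simp only [if_neg hfull]
      have hpb : ((A, B) : ℤ × ℤ) ∈ box w h :=
        ⟨⟨by omega, by push_cast [hA]; omega⟩, by omega, by push_cast [hB]; omega⟩
      have hqb : ((A, B + 1) : ℤ × ℤ) ∈ box w h :=
        ⟨⟨by omega, by push_cast [hA]; omega⟩, by omega, by push_cast [hB]; omega⟩
      have := cover (A, B) (A, B + 1) hpb hqb (by simp) (by simp) (by simp)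
      rw [Finset.one_le_card]
      rcases this with hc | hc
      · exact ⟨(A, B), memfib _ _ hc (by omega) (by omega)⟩
      · exact ⟨(A, B + 1), memfib _ _ hc (by omega) (by omega)⟩
  have hsum2 : (∑ k ∈ K, if 2 * k.1 + 2 ≤ w then 3 else 1) ≤ CF.card := by
    rw [hsum]; exact Finset.sum_le_sum fiber_ge
  have hval : (∑ k ∈ K, if 2 * k.1 + 2 ≤ w then 3 else 1)
      = M * ∑ a ∈ Finset.range W, (if 2 * a + 2 ≤ w then 3 else 1) := by
    rw [hK, Finset.sum_product, Finset.mul_sum]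
    apply Finset.sum_congr rfl
    intro a _
    by_cases hc : 2 * a + 2 ≤ w <;> simp [hc, mul_comm]
  have hMm : M = m := by omega
  rcases Nat.even_or_odd w with ⟨n, hn⟩ | ⟨n, hn⟩
  · have hWn : W = n := by omega
    have hS : (∑ a ∈ Finset.range W, (if 2 * a + 2 ≤ w then 3 else 1)) = 3 * n := by
      rw [hWn]
      rw [Finset.sum_congr rfl (fun a haa => if_pos (by
        simp only [Finset.mem_range] at haa; omega))]
      simp [mul_comm]
    rw [hS] at hval
    have hkey : 4 * (M * (3 * n)) = 3 * h * w := by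
      rw [hMm, hm, hn]; ring
    omega
  · have hWn : W = n + 1 := by omega
    have hS : (∑ a ∈ Finset.range W, (if 2 * a + 2 ≤ w then 3 else 1)) = 3 * n + 1 := by
      rw [hWn, Finset.sum_range_succ]
      rw [Finset.sum_congr rfl (fun a haa => if_pos (by
        simp only [Finset.mem_range] at haa; omega))]
      rw [if_neg (by omega)]
      simp [mul_comm]
    rw [hS] at hval
    have hkey : 4 * (M * (3 * n + 1)) + h = 3 * h * w := by
      rw [hMm, hm, hn]; ring
    omega
end
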